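/- Let P be a zigzag poset with extrema {z_i | i ∈ ℕ} and associated total order ⊑, and let V be a pointwise finite dimensional persistence module indexed by P. Assume that for every n ∈ ℕ, for every interval decomposition V(n) = ⊕_{U ∈ A} U of the restriction V(n), and for every U ∈ A, we have U_{z_0} ≠ 0 or U_{z_n} ≠ 0. Then there exists m ∈ ℕ such that V is monotonic after z_m. -/

import Mathlib

universe u v w w'

/-- A persistence module indexed by a poset `P`, over a field `k`. -/
structure PersMod (k : Type u) [Field k] (P : Type v) [PartialOrder P] :
    Type (max u v (w + 1)) where
  space : P → Type w
  [acg : ∀ x, AddCommGroup (space x)]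
  [mod : ∀ x, Module k (space x)]
  map : ∀ {x y : P}, x ≤ y → (space x →ₗ[k] space y)
  map_id : ∀ x : P, map (le_refl x) = LinearMap.id
  map_comp : ∀ {x y z : P} (hxy : x ≤ y) (hyz : y ≤ z),
    (map hyz).comp (map hxy) = map (hxy.trans hyz)

attribute [instance] PersMod.acg PersMod.mod

variable (k : Type u) [Field k] {P : Type v} [PartialOrder P]

/-- A morphism of persistence modules (a natural transformation). -/
structure PersHom (V : PersMod.{u, v, w} k P) (W : PersMod.{u, v, w'} k P) where
  app : ∀ x : P, V.space x →ₗ[k] W.space x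
  natural : ∀ {x y : P} (h : x ≤ y) (v : V.space x),
    app y (V.map h v) = W.map h (app x v)

/-- An isomorphism of persistence modules. -/
structure PersIso (V : PersMod.{u, v, w} k P) (W : PersMod.{u, v, w'} k P) where
  app : ∀ x : P, V.space x ≃ₗ[k] W.space x
  natural : ∀ {x y : P} (h : x ≤ y) (v : V.space x),
    app y (V.map h v) = W.map h (app x v)

/-- A subset `I` of a poset is convex if `x ≤ y ≤ z`, `x ∈ I`, `z ∈ I` imply `y ∈ I`. -/
def IsConvexIn (I : Set P) : Prop :=
  ∀ ⦃x y z : P⦄, x ∈ I → z ∈ I → x ≤ y → y ≤ z → y ∈ I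

/-- A subset `I` of a poset is connected if any two points of `I` are joined by a
zigzag path inside `I`. -/
def IsConnectedIn (I : Set P) : Prop :=
  ∀ x ∈ I, ∀ z ∈ I, ∃ (n : ℕ) (c : ℕ → P), (∀ i ≤ n, c i ∈ I) ∧ c 0 = x ∧ c n = z ∧
    ∀ i < n, c i ≤ c (i + 1) ∨ c (i + 1) ≤ c i

/-- An interval in a poset: nonempty, convex and connected. -/
def IsPosetInterval (I : Set P) : Prop :=
  I.Nonempty ∧ IsConvexIn I ∧ IsConnectedIn I

open Classical in
/-- The subspace of `k` used as the value of the constant module at `x`. -/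
noncomputable def constSub (I : Set P) (x : P) : Submodule k k :=
  if x ∈ I then ⊤ else ⊥

open Classical in
/-- The structure map of the constant module. -/
noncomputable def constMap (I : Set P) (x y : P) :
    constSub k I x →ₗ[k] constSub k I y :=
  LinearMap.codRestrict (constSub k I y)
    ((if y ∈ I then (LinearMap.id : k →ₗ[k] k) else 0).comp (constSub k I x).subtype)
    (fun c => by
      by_cases hy : y ∈ I
      · simp [constSub, hy]
      · have h0 : ((if y ∈ I then (LinearMap.id : k →ₗ[k] k) else 0).comp
            (constSub k I x).subtype) c = 0 := by
          rw [if_neg hy]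
          rfl
        rw [h0]
        exact Submodule.zero_mem _)

open Classical in
/-- The constant (interval) module `M(I)` attached to a convex subset `I`. -/
noncomputable def constMod (I : Set P) (hI : IsConvexIn I) : PersMod.{u, v, u} k P where
  space x := constSub k I x
  map {x y} _ := constMap k I x y
  map_id := fun x => by
    ext c
    by_cases hx : x ∈ I
    · simp [constMap, hx]
    · have hc : (c : k) = 0 := by
        have hb : constSub k I x = ⊥ := if_neg hx
        have hm : ∀ (S : Submodule k k) (d : S), S = ⊥ → (d : k) = 0 := by
            rintro S d rfl
            exact (Submodule.mem_bot k).1 d.2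
        exact hm _ c hb
      simp [constMap, hx, hc]
  map_comp := fun {x y z} hxy hyz => by
    ext c
    by_cases hz : z ∈ I
    · by_cases hy : y ∈ I
      · simp [constMap, hy, hz]
      · have hx : x ∉ I := fun hx => hy (hI hx hz hxy hyz)
        have hc : (c : k) = 0 := by
          have hb : constSub k I x = ⊥ := if_neg hx
          have hm : ∀ (S : Submodule k k) (d : S), S = ⊥ → (d : k) = 0 := by
            rintro S d rfl
            exact (Submodule.mem_bot k).1 d.2
          exact hm _ c hb
        simp [constMap, hy, hz, hc]
    · simp [constMap, hz]

/-- A submodule of a persistence module: a family of subspaces preserved by the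
structure maps. -/
structure PersSubmod (V : PersMod.{u, v, w} k P) where
  carrier : ∀ x : P, Submodule k (V.space x)
  mapLe : ∀ {x y : P} (h : x ≤ y), ∀ v ∈ carrier x, V.map h v ∈ carrier y

/-- A submodule of a persistence module, viewed as a persistence module in its own
right. -/
def PersSubmod.toPersMod {V : PersMod.{u, v, w} k P} (U : PersSubmod k V) :
    PersMod.{u, v, w} k P where
  space x := U.carrier x
  map {x y} h := (V.map h).restrict (U.mapLe h)
  map_id := fun x => by
    ext c
    simp [LinearMap.restrict_apply, V.map_id]
  map_comp := fun {x y z} hxy hyz => by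
    ext c
    have := LinearMap.congr_fun (V.map_comp hxy hyz) (c : V.space x)
    simpa [LinearMap.restrict_apply] using this

/-- A persistence module is an interval module if it is isomorphic to a constant
module `M(I)` for some interval `I`. -/
def IsIntervalModule (V : PersMod.{u, v, w} k P) : Prop :=
  ∃ (I : Set P) (hI : IsPosetInterval I), Nonempty (PersIso k V (constMod k I hI.2.1))

/-- `A` is an internal direct sum decomposition of `V`:
at each point the subspaces are independent and span everything. -/
def IsDecomp (V : PersMod.{u, v, w} k P) (A : Set (PersSubmod k V)) : Prop :=
  ∀ x : P, iSupIndep (fun U : A => (U : PersSubmod k V).carrier x) ∧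
    ⨆ U : A, (U : PersSubmod k V).carrier x = ⊤

/-- An interval decomposition of `V`. -/
def IsIntervalDecomp (V : PersMod.{u, v, w} k P) (A : Set (PersSubmod k V)) : Prop :=
  IsDecomp k V A ∧ ∀ U ∈ A, IsIntervalModule k U.toPersMod

/-- `V` has an interval decomposition. -/
def HasIntervalDecomp (V : PersMod.{u, v, w} k P) : Prop :=
  ∃ A : Set (PersSubmod k V), IsIntervalDecomp k V A

/-- `P` is a zigzag poset with extrema `z i` (`i ∈ Γ ⊆ ℤ`) and associated total
order `sq` (`⊑`): `sq` is a total order on the underlying set of `P` such that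
(1) `i < j` in `Γ` implies `z i ⊏ z j`; (2) any pair `x ≤ y` in `P` lies between two
consecutive extrema with respect to `⊑`; (3) between consecutive extrema, the partial
order of `P` agrees with `⊑` or with its reverse, alternating with the parity of the
index. -/
def IsZigzagWith {P : Type v} [PartialOrder P] (Γ : Set ℤ) (z : ℤ → P)
    (sq : P → P → Prop) : Prop :=
  IsLinearOrder P sq ∧
  (∀ i ∈ Γ, ∀ j ∈ Γ, i < j → sq (z i) (z j) ∧ z i ≠ z j) ∧
  (∀ x y : P, x ≤ y → ∃ i : ℤ, i ∈ Γ ∧ i + 1 ∈ Γ ∧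
    sq (z i) x ∧ sq x (z (i + 1)) ∧ sq (z i) y ∧ sq y (z (i + 1))) ∧
  ((∀ i : ℤ, i ∈ Γ → i + 1 ∈ Γ → ∀ x y : P,
      sq (z i) x → sq x y → sq y (z (i + 1)) →
      (Odd i → x ≤ y) ∧ (Even i → y ≤ x)) ∨
   (∀ i : ℤ, i ∈ Γ → i + 1 ∈ Γ → ∀ x y : P,
      sq (z i) x → sq x y → sq y (z (i + 1)) →
      (Odd i → y ≤ x) ∧ (Even i → x ≤ y)))

/-- `P` is a zigzag poset with extrema `z i`, `i ∈ Γ`. -/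
def IsZigzag {P : Type v} [PartialOrder P] (Γ : Set ℤ) (z : ℤ → P) : Prop :=
  ∃ sq : P → P → Prop, IsZigzagWith Γ z sq

/-- The restriction of a persistence module to a full subposet. -/
def restrictMod {P : Type v} [PartialOrder P] (V : PersMod.{u, v, w} k P)
    (S : Set P) : PersMod.{u, v, w} k S where
  space x := V.space x.1
  map {_ _} h := V.map (Subtype.coe_le_coe.mpr h)
  map_id := fun x => V.map_id x.1
  map_comp := fun h1 h2 => V.map_comp (Subtype.coe_le_coe.mpr h1) (Subtype.coe_le_coe.mpr h2)

/-- The segment `P(n) = {x ∈ P | z 0 ⊑ x ⊑ z n}` of a zigzag poset. -/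
def zigzagSeg {P : Type v} (z : ℤ → P) (sq : P → P → Prop) (n : ℤ) : Set P :=
  {x : P | sq (z 0) x ∧ sq x (z n)}

/-- `V` is monotonic after `z m`: for every `n ≥ m`, every interval decomposition of
the restriction `V(n)` of `V` to `P(n)`, and every summand `U` vanishing at `z n`,
the summand `U` vanishes at every point `x` with `z m ⊑ x ⊑ z n`. -/
def MonotonicAfter {P : Type v} [PartialOrder P] (z : ℤ → P) (sq : P → P → Prop)
    (V : PersMod.{u, v, w} k P) (m : ℤ) : Prop :=
  ∀ n : ℤ, m ≤ n →
    ∀ A : Set (PersSubmod k (restrictMod k V (zigzagSeg z sq n))),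
      IsIntervalDecomp k (restrictMod k V (zigzagSeg z sq n)) A →
      ∀ U ∈ A, (∀ p : ↥(zigzagSeg z sq n), p.1 = z n → U.carrier p = ⊥) →
        ∀ p : ↥(zigzagSeg z sq n), sq (z m) p.1 → U.carrier p = ⊥


/-! ### Auxiliary development -/

section ZigzagAux

variable {z : ℤ → P} {sq : P → P → Prop}

theorem auxExistsStep {Q : ℕ → Prop} : ∀ t : ℕ, Q 0 → ¬ Q t → ∃ j, j < t ∧ Q j ∧ ¬ Q (j+1) := by
  intro t h0 ht
  induction t with
  | zero => exact absurd h0 ht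
  | succ t ih =>
    by_cases h : Q t
    · exact ⟨t, Nat.lt_succ_self t, h, ht⟩
    · obtain ⟨j, hj, h1, h2⟩ := ih h
      exact ⟨j, hj.trans (Nat.lt_succ_self t), h1, h2⟩

variable (hzz : IsZigzagWith {i : ℤ | 0 ≤ i} z sq)
include hzz

theorem auxZMono {i j : ℤ} (h0 : 0 ≤ i) (hij : i ≤ j) : sq (z i) (z j) := by
  haveI := hzz.1
  rcases eq_or_lt_of_le hij with rfl | hlt
  · exact refl_of sq _
  · exact (hzz.2.1 i h0 j (by simp only [Set.mem_setOf_eq]; omega) hlt).1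

theorem auxZNe {i : ℤ} (h0 : 0 ≤ i) : z i ≠ z (i+1) :=
  (hzz.2.1 i h0 (i+1) (by simp only [Set.mem_setOf_eq]; omega) (by omega)).2

theorem auxSegMem {N i : ℤ} (h0 : 0 ≤ i) (hiN : i ≤ N) : z i ∈ zigzagSeg z sq N :=
  ⟨auxZMono hzz le_rfl h0, auxZMono hzz h0 hiN⟩

theorem auxConsecCmp (i : ℤ) (hi : 0 ≤ i) : z i ≤ z (i+1) ∨ z (i+1) ≤ z i := by
  haveI := hzz.1
  have h1 : sq (z i) (z (i+1)) := auxZMono hzz hi (by omega)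
  have hi1 : (i+1) ∈ {i : ℤ | 0 ≤ i} := by simp only [Set.mem_setOf_eq]; omega
  rcases hzz.2.2.2 with hbr | hbr <;>
  · have hcc := hbr i hi hi1 (z i) (z (i+1)) (refl_of sq _) h1 (refl_of sq _)
    rcases Int.even_or_odd i with hpar | hpar
    · first
        | exact Or.inr (hcc.2 hpar)
        | exact Or.inl (hcc.2 hpar)
    · first
        | exact Or.inl (hcc.1 hpar)
        | exact Or.inr (hcc.1 hpar)

theorem auxBetween {c d w : P} (hcd : c ≤ d)
    (hb : (sq c w ∧ sq w d) ∨ (sq d w ∧ sq w c)) :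
    (c ≤ w ∧ w ≤ d) ∨ (d ≤ w ∧ w ≤ c) := by
  haveI := hzz.1
  obtain ⟨i, hi, hi1, hic, hci, hid, hdi⟩ := hzz.2.2.1 c d hcd
  have hw1 : sq (z i) w := by
    rcases hb with ⟨h1, _⟩ | ⟨h1, _⟩
    · exact trans_of sq hic h1
    · exact trans_of sq hid h1
  have hw2 : sq w (z (i+1)) := by
    rcases hb with ⟨_, h2⟩ | ⟨_, h2⟩
    · exact trans_of sq h2 hdi
    · exact trans_of sq h2 hci
  rcases hzz.2.2.2 with hbr | hbr <;>
    rcases Int.even_or_odd i with hpar | hpar <;>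
      rcases hb with ⟨h1, h2⟩ | ⟨h1, h2⟩
  · exact Or.inr ⟨(hbr i hi hi1 w d hw1 h2 hdi).2 hpar, (hbr i hi hi1 c w hic h1 hw2).2 hpar⟩
  · exact Or.inl ⟨(hbr i hi hi1 w c hw1 h2 hci).2 hpar, (hbr i hi hi1 d w hid h1 hw2).2 hpar⟩
  · exact Or.inl ⟨(hbr i hi hi1 c w hic h1 hw2).1 hpar, (hbr i hi hi1 w d hw1 h2 hdi).1 hpar⟩
  · exact Or.inr ⟨(hbr i hi hi1 d w hid h1 hw2).1 hpar, (hbr i hi hi1 w c hw1 h2 hci).1 hpar⟩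
  · exact Or.inl ⟨(hbr i hi hi1 c w hic h1 hw2).2 hpar, (hbr i hi hi1 w d hw1 h2 hdi).2 hpar⟩
  · exact Or.inr ⟨(hbr i hi hi1 d w hid h1 hw2).2 hpar, (hbr i hi hi1 w c hw1 h2 hci).2 hpar⟩
  · exact Or.inr ⟨(hbr i hi hi1 w d hw1 h2 hdi).1 hpar, (hbr i hi hi1 c w hic h1 hw2).1 hpar⟩
  · exact Or.inl ⟨(hbr i hi hi1 w c hw1 h2 hci).1 hpar, (hbr i hi hi1 d w hid h1 hw2).1 hpar⟩

theorem auxIntervalMem {N : ℤ} {I : Set ↥(zigzagSeg z sq N)} (hI : IsPosetInterval I)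
    {a b w : ↥(zigzagSeg z sq N)} (ha : a ∈ I) (hb : b ∈ I)
    (h1 : sq a.1 w.1) (h2 : sq w.1 b.1) : w ∈ I := by
  haveI := hzz.1
  obtain ⟨t, c, hmem, hc0, hct, hstep⟩ := hI.2.2 a ha b hb
  by_cases hwb : w = b
  · exact hwb ▸ hb
  by_cases hwa : w = a
  · exact hwa ▸ ha
  have hQ0 : sq (c 0).1 w.1 ∧ w ≠ c 0 := by rw [hc0]; exact ⟨h1, hwa⟩
  have hQt : ¬ (sq (c t).1 w.1 ∧ w ≠ c t) := by
    rw [hct]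
    rintro ⟨hs, hne⟩
    exact hwb (Subtype.ext (antisymm_of sq h2 hs))
  obtain ⟨j, hj, ⟨hQj, hwj⟩, hnQ⟩ := auxExistsStep (Q := fun j => sq (c j).1 w.1 ∧ w ≠ c j) t hQ0 hQt
  by_cases hwc : w = c (j+1)
  · exact hwc ▸ hmem _ (by omega)
  have hsw : sq w.1 (c (j+1)).1 := by
    rcases total_of sq w.1 (c (j+1)).1 with h | h
    · exact h
    · exact absurd ⟨h, fun he => hwc (congrArg id he)⟩ hnQ
  have hjm : c j ∈ I := hmem j (by omega)
  have hjm1 : c (j+1) ∈ I := hmem (j+1) (by omega)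
  rcases hstep j hj with hle | hle
  · rcases auxBetween hzz (P := P) (Subtype.coe_le_coe.mpr hle) (Or.inl ⟨hQj, hsw⟩) with
      ⟨u1, u2⟩ | ⟨u1, u2⟩
    · exact hI.2.1 hjm hjm1 (Subtype.coe_le_coe.mp u1) (Subtype.coe_le_coe.mp u2)
    · exact hI.2.1 hjm1 hjm (Subtype.coe_le_coe.mp u1) (Subtype.coe_le_coe.mp u2)
  · rcases auxBetween hzz (P := P) (Subtype.coe_le_coe.mpr hle) (Or.inr ⟨hQj, hsw⟩) with
      ⟨u1, u2⟩ | ⟨u1, u2⟩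
    · exact hI.2.1 hjm1 hjm (Subtype.coe_le_coe.mp u1) (Subtype.coe_le_coe.mp u2)
    · exact hI.2.1 hjm hjm1 (Subtype.coe_le_coe.mp u1) (Subtype.coe_le_coe.mp u2)

end ZigzagAux


section IntervalFacts

variable {Q : Type v} [PartialOrder Q] {W : PersMod.{u, v, w} k Q} {U : PersSubmod k W}
  {I : Set Q} {hcv : IsConvexIn I}

theorem auxConstMapVal (x y : Q) (hy : y ∈ I) (c : ↥(constSub k I x)) :
    (constMap k I x y c : k) = (c : k) := by
  simp only [constMap, LinearMap.codRestrict_apply, if_pos hy]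
  rfl

theorem auxNeBotIff (iso : PersIso k (PersSubmod.toPersMod k U) (constMod k I hcv)) (x : Q) :
    U.carrier x ≠ ⊥ ↔ x ∈ I := by
  constructor
  · intro hne
    by_contra hx
    apply hne
    rw [eq_bot_iff]
    intro u hu
    have h1 : (iso.app x ⟨u, hu⟩).1 = (0 : k) := by
      have := (iso.app x ⟨u, hu⟩).2
      simpa [constSub, hx] using this
    have h2 : iso.app x ⟨u, hu⟩ = 0 := Subtype.ext h1
    have h3 : (⟨u, hu⟩ : ↥(U.carrier x)) = 0 := by
      apply (iso.app x).injective
      exact h2.trans (map_zero _).symm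
    simpa [Submodule.mem_bot] using congrArg Subtype.val h3
  · intro hx
    have h1 : (1 : k) ∈ constSub k I x := by simp [constSub, hx]
    set e := (iso.app x).symm ⟨1, h1⟩ with he
    have he0 : e ≠ 0 := by
      intro h
      have h2 : (iso.app x) e = 0 := by rw [h]; simp
      rw [he] at h2; replace h2 := ((iso.app x).apply_symm_apply ⟨1, h1⟩).symm.trans h2
      have := congrArg Subtype.val h2
      exact one_ne_zero (α := k) this
    exact Submodule.ne_bot_iff _ |>.mpr ⟨e.1, e.2, fun h => he0 (Subtype.ext h)⟩

theorem auxStepBij (iso : PersIso k (PersSubmod.toPersMod k U) (constMod k I hcv)) {x y : Q} (h : x ≤ y)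
    (hx : x ∈ I) (hy : y ∈ I) :
    Function.Bijective ((W.map h).restrict (U.mapLe h) : ↥(U.carrier x) → ↥(U.carrier y)) := by
  have key : ∀ u : ↥(U.carrier x),
      (iso.app y ((W.map h).restrict (U.mapLe h) u)).1 = (iso.app x u).1 := by
    intro u
    have hnat : iso.app y ((PersSubmod.toPersMod k U).map h u) = constMap k I x y (iso.app x u) :=
      iso.natural h u
    have h2 : iso.app y ((W.map h).restrict (U.mapLe h) u) = constMap k I x y (iso.app x u) :=
      hnat
    rw [h2]
    exact auxConstMapVal k x y hy _
  constructor
  · intro u u' huu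
    apply (iso.app x).injective
    apply Subtype.ext
    rw [← key u, ← key u', huu]
  · intro vtgt
    have hmem : (iso.app y vtgt).1 ∈ constSub k I x := by
      simp [constSub, hx]
    refine ⟨(iso.app x).symm ⟨(iso.app y vtgt).1, hmem⟩, ?_⟩
    apply (iso.app y).injective
    apply Subtype.ext
    refine (key _).trans ?_
    exact congrArg Subtype.val ((iso.app x).apply_symm_apply _)

theorem auxSpanOne (iso : PersIso k (PersSubmod.toPersMod k U) (constMod k I hcv)) {x : Q}
    [FiniteDimensional k (W.space x)] (hx : x ∈ I) {u : W.space x} (hu : u ∈ U.carrier x)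
    (hu0 : u ≠ 0) {v : W.space x} (hv : v ∈ U.carrier x) : ∃ c : k, v = c • u := by
  have h1 : Module.finrank k ((PersSubmod.toPersMod k U).space x) = 1 := by
    rw [LinearEquiv.finrank_eq (iso.app x)]
    show Module.finrank k ↥(constSub k I x) = 1
    have hc : constSub k I x = ⊤ := by simp [constSub, hx]
    rw [hc, finrank_top]
    exact Module.finrank_self k
  have hle : (Submodule.span k {u} : Submodule k (W.space x)) ≤ U.carrier x := by
    rw [Submodule.span_singleton_le_iff_mem]; exact hu
  have heq : (Submodule.span k {u} : Submodule k (W.space x)) = U.carrier x := by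
    apply Submodule.eq_of_le_of_finrank_le hle
    rw [finrank_span_singleton hu0]
    exact le_of_eq h1
  rw [← heq] at hv
  obtain ⟨c, hc⟩ := Submodule.mem_span_singleton.mp hv
  exact ⟨c, hc.symm⟩

end IntervalFacts

section ProjFacts

variable {Q : Type v} [PartialOrder Q] {W : PersMod.{u, v, w} k Q}
  {A : Set (PersSubmod k W)} {U : PersSubmod k W}

/-- The complement of a summand in a decomposition, at a point. -/
noncomputable def auxCompl (U : PersSubmod k W) (hU : U ∈ A) (x : Q) : Submodule k (W.space x) :=
  ⨆ (j : ↥A) (_ : j ≠ ⟨U, hU⟩), j.1.carrier x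

theorem auxIsCompl (hA : IsDecomp k W A) (hU : U ∈ A) (x : Q) :
    IsCompl (U.carrier x) (auxCompl k U hU x) := by
  constructor
  · exact (hA x).1 ⟨U, hU⟩
  · rw [codisjoint_iff]
    apply le_antisymm le_top
    rw [← (hA x).2]
    apply iSup_le
    intro j
    by_cases hj : j = ⟨U, hU⟩
    · subst hj; exact le_sup_left
    · exact le_trans (le_iSup₂ (f := fun (j : ↥A) (_ : j ≠ ⟨U, hU⟩) => j.1.carrier x) j hj)
        le_sup_right

/-- The projection onto a summand of a decomposition, at a point. -/
noncomputable def auxProj (hA : IsDecomp k W A) (hU : U ∈ A) (x : Q) :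
    W.space x →ₗ[k] ↥(U.carrier x) :=
  (U.carrier x).projectionOnto _ (auxIsCompl k hA hU x)

theorem auxProj_self (hA : IsDecomp k W A) (hU : U ∈ A) {x : Q} {v : W.space x}
    (hv : v ∈ U.carrier x) : ((auxProj k hA hU x v : ↥(U.carrier x)) : W.space x) = v := by
  have := Submodule.projectionOnto_apply_left (auxIsCompl k hA hU x) ⟨v, hv⟩
  rw [auxProj, this]

theorem auxProj_other (hA : IsDecomp k W A) (hU : U ∈ A) {U' : PersSubmod k W} (hU' : U' ∈ A)
    (hne : U' ≠ U) {x : Q} {v : W.space x} (hv : v ∈ U'.carrier x) :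
    auxProj k hA hU x v = 0 := by
  apply Submodule.projectionOnto_apply_of_mem_right (auxIsCompl k hA hU x)
  exact le_iSup₂ (f := fun (j : ↥A) (_ : j ≠ ⟨U, hU⟩) => j.1.carrier x) ⟨U', hU'⟩
    (fun h => hne (congrArg Subtype.val h)) hv

theorem auxComplMapLe (hU : U ∈ A) {x y : Q} (h : x ≤ y) {v : W.space x}
    (hv : v ∈ auxCompl k U hU x) : W.map h v ∈ auxCompl k U hU y := by
  have hle : Submodule.map (W.map h) (auxCompl k U hU x) ≤ auxCompl k U hU y := by
    rw [auxCompl, Submodule.map_iSup]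
    apply iSup_mono
    intro j
    rw [Submodule.map_iSup]
    apply iSup_mono'
    intro hj
    refine ⟨hj, ?_⟩
    rw [Submodule.map_le_iff_le_comap]
    intro u hu
    exact j.1.mapLe h u hu
  exact hle ⟨v, hv, rfl⟩

theorem auxProj_map (hA : IsDecomp k W A) (hU : U ∈ A) {x y : Q} (h : x ≤ y) (v : W.space x) :
    ((auxProj k hA hU y (W.map h v) : ↥(U.carrier y)) : W.space y)
      = W.map h ((auxProj k hA hU x v : ↥(U.carrier x)) : W.space x) := by
  have hv : v ∈ U.carrier x ⊔ auxCompl k U hU x := by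
    rw [(auxIsCompl k hA hU x).sup_eq_top]; trivial
  obtain ⟨a, ha, b, hb, rfl⟩ := Submodule.mem_sup.mp hv
  have hpa : ((auxProj k hA hU x (a + b) : ↥(U.carrier x)) : W.space x) = a := by
    rw [map_add]
    have h1 := auxProj_self k hA hU ha
    have h2 : auxProj k hA hU x b = 0 :=
      Submodule.projectionOnto_apply_of_mem_right (auxIsCompl k hA hU x) hb
    rw [Submodule.coe_add, h1, h2]
    simp
  have hpb : ((auxProj k hA hU y (W.map h (a + b)) : ↥(U.carrier y)) : W.space y)
      = W.map h a := by
    rw [map_add, map_add]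
    have h1 := auxProj_self k hA hU (U.mapLe h a ha)
    have h2 : auxProj k hA hU y (W.map h b) = 0 :=
      Submodule.projectionOnto_apply_of_mem_right (auxIsCompl k hA hU y)
        (auxComplMapLe k hU h hb)
    rw [Submodule.coe_add, h1, h2]
    simp
  rw [hpa, hpb]

end ProjFacts


section Rho

variable (z : ℤ → P) (V : PersMod.{u, v, w} k P)

/-- Generators of the relation submodule defining the colimit over the first `n+1` extrema. -/
def auxRelSet (n : ℕ) : Set (∀ i : ℕ, V.space (z i)) :=
  {x | ∃ i : ℕ, i < n ∧ ((∃ (h : z (i : ℕ) ≤ z ((i+1 : ℕ) : ℤ)) (v : V.space (z i)),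
      x = Pi.single i v - Pi.single (i+1) (V.map h v)) ∨
    (∃ (h : z ((i+1 : ℕ) : ℤ) ≤ z (i : ℕ)) (v : V.space (z ((i+1 : ℕ) : ℤ))),
      x = Pi.single (i+1) v - Pi.single i (V.map h v)))}

/-- The relation submodule. -/
noncomputable def auxR (n : ℕ) : Submodule k (∀ i : ℕ, V.space (z i)) :=
  Submodule.span k (auxRelSet k z V n)

/-- The submodule of compatible sections over the first `n+1` extrema. -/
def auxL (n : ℕ) : Submodule k (∀ i : ℕ, V.space (z i)) where
  carrier := {s | ∀ i : ℕ, i < n →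
    (∀ h : z (i : ℕ) ≤ z ((i+1 : ℕ) : ℤ), V.map h (s i) = s (i+1)) ∧
    (∀ h : z ((i+1 : ℕ) : ℤ) ≤ z (i : ℕ), V.map h (s (i+1)) = s i)}
  add_mem' := by
    intro a b ha hb
    intro i hi
    constructor
    · intro h
      simp only [Pi.add_apply, map_add, (ha i hi).1 h, (hb i hi).1 h]
    · intro h
      simp only [Pi.add_apply, map_add, (ha i hi).2 h, (hb i hi).2 h]
  zero_mem' := by
    intro i hi
    constructor <;> intro h <;> simp
  smul_mem' := by
    intro c a ha i hi
    constructor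
    · intro h
      simp only [Pi.smul_apply, map_smul, (ha i hi).1 h]
    · intro h
      simp only [Pi.smul_apply, map_smul, (ha i hi).2 h]

/-- The canonical map from sections to the colimit. -/
noncomputable def auxLam (n : ℕ) : (∀ i : ℕ, V.space (z i)) →ₗ[k]
    ((∀ i : ℕ, V.space (z i)) ⧸ auxR k z V n) :=
  (auxR k z V n).mkQ ∘ₗ (LinearMap.single k (fun i : ℕ => V.space (z i)) 0) ∘ₗ
    (LinearMap.proj 0)

/-- The rank invariant: rank of the canonical map from the limit to the colimit over
the first `n+1` extrema. -/
noncomputable def auxRho (n : ℕ) : ℕ :=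
  Module.finrank k (Submodule.map (auxLam k z V n) (auxL k z V n))

variable {z} {sq : P → P → Prop}

theorem auxLam_apply (n : ℕ) (s : ∀ i : ℕ, V.space (z i)) :
    auxLam k z V n s = (auxR k z V n).mkQ (Pi.single 0 (s 0)) := rfl

theorem auxClassEq (hzz : IsZigzagWith {i : ℤ | 0 ≤ i} z sq) (n : ℕ)
    {s : ∀ i : ℕ, V.space (z i)} (hs : s ∈ auxL k z V n) :
    ∀ i : ℕ, i ≤ n →
      (auxR k z V n).mkQ (Pi.single 0 (s 0)) = (auxR k z V n).mkQ (Pi.single i (s i)) := by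
  intro i
  induction i with
  | zero => intro _; rfl
  | succ i ih =>
    intro hi
    rw [ih (by omega)]
    have hcc := auxConsecCmp hzz (i : ℤ) (Int.ofNat_nonneg i)
    rcases hcc with h | h
    · have h' : z (i : ℕ) ≤ z ((i+1 : ℕ) : ℤ) := h
      have hmap : V.map h' (s i) = s (i+1) := (hs i (by omega)).1 h'
      rw [Submodule.mkQ_apply, Submodule.mkQ_apply, Submodule.Quotient.eq]
      apply Submodule.subset_span
      exact ⟨i, by omega, Or.inl ⟨h', s i, by rw [hmap]⟩⟩
    · have h' : z ((i+1 : ℕ) : ℤ) ≤ z (i : ℕ) := h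
      have hmap : V.map h' (s (i+1)) = s i := (hs i (by omega)).2 h'
      rw [Submodule.mkQ_apply, Submodule.mkQ_apply, Submodule.Quotient.eq]
      have hmem : Pi.single (i+1) (s (i+1)) - Pi.single i (s i) ∈ auxR k z V n :=
        Submodule.subset_span ⟨i, by omega, Or.inr ⟨h', s (i+1), by rw [hmap]⟩⟩
      have hneg := neg_mem hmem
      rwa [neg_sub] at hneg

end Rho


section Counting

variable {z : ℤ → P} {sq : P → P → Prop} {V : PersMod.{u, v, w} k P} {N : ℤ}
  {A : Set (PersSubmod k (restrictMod k V (zigzagSeg z sq N)))}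

/-- The carrier of a summand at the `i`-th extremum, as a submodule of the ambient space. -/
noncomputable def auxCarr (hzz : IsZigzagWith {i : ℤ | 0 ≤ i} z sq)
    (U : PersSubmod k (restrictMod k V (zigzagSeg z sq N))) (i : ℕ) :
    Submodule k (V.space (z (i : ℕ))) :=
  if h : (i : ℤ) ≤ N then U.carrier ⟨z (i : ℕ), auxSegMem hzz (Int.ofNat_nonneg i) h⟩ else ⊥

theorem auxCarr_eq (hzz : IsZigzagWith {i : ℤ | 0 ≤ i} z sq)
    (U : PersSubmod k (restrictMod k V (zigzagSeg z sq N))) (i : ℕ) (h : (i : ℤ) ≤ N)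
    (pf : z (i : ℕ) ∈ zigzagSeg z sq N) :
    auxCarr k hzz U i = U.carrier ⟨z (i : ℕ), pf⟩ := dif_pos h

theorem auxCarr_mapLe (hzz : IsZigzagWith {i : ℤ | 0 ≤ i} z sq)
    (U : PersSubmod k (restrictMod k V (zigzagSeg z sq N))) {i j : ℕ} (hi : (i : ℤ) ≤ N)
    (hj : (j : ℤ) ≤ N) (h : z (i : ℕ) ≤ z (j : ℕ)) {v : V.space (z (i : ℕ))}
    (hv : v ∈ auxCarr k hzz U i) : V.map h v ∈ auxCarr k hzz U j := by
  rw [auxCarr_eq k hzz U i hi (auxSegMem hzz (Int.ofNat_nonneg i) hi)] at hv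
  rw [auxCarr_eq k hzz U j hj (auxSegMem hzz (Int.ofNat_nonneg j) hj)]
  exact U.mapLe (Subtype.mk_le_mk.mpr h) v hv

/-- The projection onto a summand at the `i`-th extremum, on the ambient space. -/
noncomputable def auxP (hzz : IsZigzagWith {i : ℤ | 0 ≤ i} z sq)
    (hA : IsDecomp k (restrictMod k V (zigzagSeg z sq N)) A)
    {U : PersSubmod k (restrictMod k V (zigzagSeg z sq N))} (hU : U ∈ A) (i : ℕ) :
    V.space (z (i : ℕ)) →ₗ[k] V.space (z (i : ℕ)) :=
  if h : (i : ℤ) ≤ N then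
    (U.carrier ⟨z (i : ℕ), auxSegMem hzz (Int.ofNat_nonneg i) h⟩).subtype ∘ₗ
      auxProj k hA hU ⟨z (i : ℕ), auxSegMem hzz (Int.ofNat_nonneg i) h⟩
  else 0

variable {hzz : IsZigzagWith {i : ℤ | 0 ≤ i} z sq}
  {hA : IsDecomp k (restrictMod k V (zigzagSeg z sq N)) A}
  {U : PersSubmod k (restrictMod k V (zigzagSeg z sq N))} {hU : U ∈ A}

theorem auxP_eq (i : ℕ) (h : (i : ℤ) ≤ N) (pf : z (i : ℕ) ∈ zigzagSeg z sq N) :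
    auxP k hzz hA hU i = (U.carrier ⟨z (i : ℕ), pf⟩).subtype ∘ₗ
      auxProj k hA hU ⟨z (i : ℕ), pf⟩ := dif_pos h

theorem auxP_mem (i : ℕ) (h : (i : ℤ) ≤ N) (v : V.space (z (i : ℕ))) :
    auxP k hzz hA hU i v ∈ auxCarr k hzz U i := by
  have pf := auxSegMem hzz (Int.ofNat_nonneg i) h
  rw [auxP_eq k i h pf, auxCarr_eq k hzz U i h pf]
  exact (auxProj k hA hU ⟨z (i : ℕ), pf⟩ v).2

theorem auxP_self (i : ℕ) (h : (i : ℤ) ≤ N) {v : V.space (z (i : ℕ))}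
    (hv : v ∈ auxCarr k hzz U i) : auxP k hzz hA hU i v = v := by
  have pf := auxSegMem hzz (Int.ofNat_nonneg i) h
  rw [auxCarr_eq k hzz U i h pf] at hv
  rw [auxP_eq k i h pf]
  exact auxProj_self k hA hU hv

theorem auxP_other (i : ℕ) (h : (i : ℤ) ≤ N)
    {U' : PersSubmod k (restrictMod k V (zigzagSeg z sq N))} (hU' : U' ∈ A) (hne : U' ≠ U)
    {v : V.space (z (i : ℕ))}
    (hv : v ∈ auxCarr k hzz U' i) : auxP k hzz hA hU i v = 0 := by
  have pf := auxSegMem hzz (Int.ofNat_nonneg i) h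
  rw [auxCarr_eq k hzz U' i h pf] at hv
  rw [auxP_eq k i h pf]
  show ((U.carrier ⟨z (i : ℕ), pf⟩).subtype (auxProj k hA hU ⟨z (i : ℕ), pf⟩ v)) = 0
  rw [auxProj_other k hA hU hU' hne hv]
  simp

theorem auxP_map {i j : ℕ} (hi : (i : ℤ) ≤ N) (hj : (j : ℤ) ≤ N)
    (h : z (i : ℕ) ≤ z (j : ℕ)) (v : V.space (z (i : ℕ))) :
    auxP k hzz hA hU j (V.map h v) = V.map h (auxP k hzz hA hU i v) := by
  have pfi := auxSegMem hzz (Int.ofNat_nonneg i) hi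
  have pfj := auxSegMem hzz (Int.ofNat_nonneg j) hj
  rw [auxP_eq k i hi pfi, auxP_eq k j hj pfj]
  exact auxProj_map k hA hU (x := ⟨z (i : ℕ), pfi⟩) (y := ⟨z (j : ℕ), pfj⟩)
    (Subtype.mk_le_mk.mpr h) v

end Counting


section Counting2

variable {z : ℤ → P} {sq : P → P → Prop} {V : PersMod.{u, v, w} k P} {N : ℤ}
  {A : Set (PersSubmod k (restrictMod k V (zigzagSeg z sq N)))}
  {hzz : IsZigzagWith {i : ℤ | 0 ≤ i} z sq}
  {hA : IsDecomp k (restrictMod k V (zigzagSeg z sq N)) A}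
  {U : PersSubmod k (restrictMod k V (zigzagSeg z sq N))} {hU : U ∈ A}

theorem auxL_mem (n : ℕ) (s : ∀ i : ℕ, V.space (z (i : ℕ))) :
    s ∈ auxL k z V n ↔ ∀ i : ℕ, i < n →
      (∀ h : z (i : ℕ) ≤ z ((i+1 : ℕ) : ℤ), V.map h (s i) = s (i+1)) ∧
      (∀ h : z ((i+1 : ℕ) : ℤ) ≤ z (i : ℕ), V.map h (s (i+1)) = s i) := Iff.rfl

theorem auxSuppConv {I : Set ↥(zigzagSeg z sq N)} (hI : IsPosetInterval I)
    (iso : PersIso k (PersSubmod.toPersMod k U) (constMod k I hI.2.1))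
    {i j l : ℕ} (hij : i ≤ j) (hjl : j ≤ l) (hl : (l : ℤ) ≤ N)
    (hb0 : auxCarr k hzz U i ≠ ⊥) (hb2 : auxCarr k hzz U l ≠ ⊥) :
    auxCarr k hzz U j ≠ ⊥ := by
  have hiN : (i : ℤ) ≤ N := le_trans (by exact_mod_cast Nat.le_trans hij hjl) hl
  have hjN : (j : ℤ) ≤ N := le_trans (by exact_mod_cast hjl) hl
  have pfi := auxSegMem hzz (Int.ofNat_nonneg i) hiN
  have pfj := auxSegMem hzz (Int.ofNat_nonneg j) hjN
  have pfl := auxSegMem hzz (Int.ofNat_nonneg l) hl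
  rw [auxCarr_eq k hzz U i hiN pfi] at hb0
  rw [auxCarr_eq k hzz U l hl pfl] at hb2
  rw [auxCarr_eq k hzz U j hjN pfj]
  have mi := (auxNeBotIff k iso _).mp hb0
  have ml := (auxNeBotIff k iso _).mp hb2
  have mj : (⟨z (j : ℕ), pfj⟩ : ↥(zigzagSeg z sq N)) ∈ I := by
    apply auxIntervalMem hzz hI mi ml
    · exact auxZMono hzz (Int.ofNat_nonneg i) (by exact_mod_cast hij)
    · exact auxZMono hzz (Int.ofNat_nonneg j) (by exact_mod_cast hjl)
  exact (auxNeBotIff k iso _).mpr mj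

theorem auxCompSect (n : ℕ) (hn : (n : ℤ) ≤ N) {s : ∀ i : ℕ, V.space (z (i : ℕ))}
    (hs : s ∈ auxL k z V n) :
    (fun i => auxP k hzz hA hU i (s i)) ∈ auxL k z V n := by
  rw [auxL_mem]
  intro i hi
  have hiN : (i : ℤ) ≤ N := by
    have h1 : (i : ℤ) < (n : ℤ) := by exact_mod_cast hi
    omega
  have hi1N : ((i+1 : ℕ) : ℤ) ≤ N := by
    have h1 : ((i+1 : ℕ) : ℤ) ≤ (n : ℤ) := by exact_mod_cast hi
    omega
  constructor
  · intro h
    rw [← auxP_map k hiN hi1N h (s i), ((auxL_mem k n s).mp hs i hi).1 h]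
  · intro h
    rw [← auxP_map k hi1N hiN h (s (i+1)), ((auxL_mem k n s).mp hs i hi).2 h]

theorem auxSect (n : ℕ) (hn : (n : ℤ) ≤ N)
    {I : Set ↥(zigzagSeg z sq N)} (hI : IsPosetInterval I)
    (iso : PersIso k (PersSubmod.toPersMod k U) (constMod k I hI.2.1))
    (hb0 : auxCarr k hzz U 0 ≠ ⊥) (hbn : auxCarr k hzz U n ≠ ⊥)
    {u0 : V.space (z (0 : ℕ))} (hu0 : u0 ∈ auxCarr k hzz U 0) :
    ∃ s : ∀ i : ℕ, V.space (z (i : ℕ)), s ∈ auxL k z V n ∧ s 0 = u0 ∧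
      ∀ i : ℕ, i ≤ n → s i ∈ auxCarr k hzz U i := by
  have key : ∀ j : ℕ, j ≤ n → ∃ s : ∀ i : ℕ, V.space (z (i : ℕ)), s 0 = u0 ∧
      (∀ i, i ≤ j → s i ∈ auxCarr k hzz U i) ∧
      (∀ i, i < j → (∀ h : z (i : ℕ) ≤ z ((i+1 : ℕ) : ℤ), V.map h (s i) = s (i+1)) ∧
        (∀ h : z ((i+1 : ℕ) : ℤ) ≤ z (i : ℕ), V.map h (s (i+1)) = s i)) := by
    intro j
    induction j with
    | zero =>
      intro _
      refine ⟨Pi.single 0 u0, Pi.single_eq_same _ _, ?_, fun i hi => absurd hi (by omega)⟩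
      intro i hi
      have : i = 0 := by omega
      subst this
      rw [Pi.single_eq_same]
      exact hu0
    | succ j ih =>
      intro hj1
      obtain ⟨s, hs0, hsmem, hscompat⟩ := ih (by omega)
      have hjN : (j : ℤ) ≤ N := by
        have h1 : (j : ℤ) ≤ (n : ℤ) := by exact_mod_cast Nat.le_of_succ_le hj1
        omega
      have hj1N : ((j+1 : ℕ) : ℤ) ≤ N := by
        have h1 : ((j+1 : ℕ) : ℤ) ≤ (n : ℤ) := by exact_mod_cast hj1
        omega
      have hbj : auxCarr k hzz U j ≠ ⊥ :=
        auxSuppConv k hI iso (Nat.zero_le j) (by omega) hn hb0 hbn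
      have hbj1 : auxCarr k hzz U (j+1) ≠ ⊥ :=
        auxSuppConv k hI iso (Nat.zero_le _) hj1 hn hb0 hbn
      rcases auxConsecCmp hzz (j : ℤ) (Int.ofNat_nonneg j) with hf | hb
      · have hf' : z (j : ℕ) ≤ z ((j+1 : ℕ) : ℤ) := hf
        refine ⟨Function.update s (j+1) (V.map hf' (s j)), ?_, ?_, ?_⟩
        · rw [Function.update_of_ne (by omega)]; exact hs0
        · intro i hi
          rcases Nat.lt_or_ge i (j+1) with h' | h'
          · rw [Function.update_of_ne (by omega)]; exact hsmem i (by omega)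
          · have : i = j+1 := by omega
            subst this
            rw [Function.update_self]
            exact auxCarr_mapLe k hzz U hjN hj1N hf' (hsmem j le_rfl)
        · intro i hi
          rcases Nat.lt_or_ge i j with h' | h'
          · have e1 : Function.update s (j+1) (V.map hf' (s j)) i = s i :=
              Function.update_of_ne (by omega) _ _
            have e2 : Function.update s (j+1) (V.map hf' (s j)) (i+1) = s (i+1) :=
              Function.update_of_ne (by omega) _ _
            rw [e1, e2]
            exact hscompat i h'
          · have : i = j := by omega
            subst this
            constructor
            · intro h
              rw [Function.update_of_ne (show i ≠ i + 1 by omega), Function.update_self]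
            · intro h
              exact absurd (le_antisymm hf' h) (auxZNe hzz (Int.ofNat_nonneg i))
      · have hb' : z ((j+1 : ℕ) : ℤ) ≤ z (j : ℕ) := hb
        have pfj := auxSegMem hzz (Int.ofNat_nonneg j) hjN
        have pfj1 := auxSegMem hzz (Int.ofNat_nonneg (j+1)) hj1N
        have mIj : (⟨z (j : ℕ), pfj⟩ : ↥(zigzagSeg z sq N)) ∈ I := by
          apply (auxNeBotIff k iso _).mp
          rw [← auxCarr_eq k hzz U j hjN pfj]
          exact hbj
        have mIj1 : (⟨z ((j+1 : ℕ) : ℤ), pfj1⟩ : ↥(zigzagSeg z sq N)) ∈ I := by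
          apply (auxNeBotIff k iso _).mp
          rw [← auxCarr_eq k hzz U (j+1) hj1N pfj1]
          exact hbj1
        have hsurj := (auxStepBij k iso (Subtype.mk_le_mk.mpr hb') mIj1 mIj).2
        have hmemj : s j ∈ U.carrier ⟨z (j : ℕ), pfj⟩ := by
          rw [← auxCarr_eq k hzz U j hjN pfj]
          exact hsmem j le_rfl
        obtain ⟨upre, hupre⟩ := hsurj ⟨s j, hmemj⟩
        refine ⟨Function.update s (j+1) (@id (V.space (z ((j+1 : ℕ) : ℤ))) upre.1), ?_, ?_, ?_⟩
        · rw [Function.update_of_ne (by omega)]; exact hs0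
        · intro i hi
          rcases Nat.lt_or_ge i (j+1) with h' | h'
          · rw [Function.update_of_ne (by omega)]; exact hsmem i (by omega)
          · have : i = j+1 := by omega
            subst this
            rw [Function.update_self, auxCarr_eq k hzz U (j+1) hj1N pfj1]
            exact upre.2
        · intro i hi
          rcases Nat.lt_or_ge i j with h' | h'
          · have e1 : Function.update s (j+1) (@id (V.space (z ((j+1 : ℕ) : ℤ))) upre.1) i = s i :=
              Function.update_of_ne (by omega) _ _
            have e2 : Function.update s (j+1) (@id (V.space (z ((j+1 : ℕ) : ℤ))) upre.1) (i+1) = s (i+1) :=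
              Function.update_of_ne (by omega) _ _
            rw [e1, e2]
            exact hscompat i h'
          · have : i = j := by omega
            subst this
            constructor
            · intro h
              exact absurd (le_antisymm h hb') (auxZNe hzz (Int.ofNat_nonneg i))
            · intro h
              rw [Function.update_self, Function.update_of_ne (show i ≠ i + 1 by omega)]
              exact congrArg Subtype.val hupre
  obtain ⟨s, hs0, hsmem, hscompat⟩ := key n le_rfl
  exact ⟨s, (auxL_mem k n s).mpr hscompat, hs0, hsmem⟩

end Counting2


section Counting3

variable {z : ℤ → P} {sq : P → P → Prop} {V : PersMod.{u, v, w} k P} {N : ℤ}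
  {A : Set (PersSubmod k (restrictMod k V (zigzagSeg z sq N)))}

/-- Iterated composition of backward transport maps. -/
noncomputable def auxChain {M : Type w} [AddCommGroup M] [Module k M]
    (z : ℤ → P) (V : PersMod.{u, v, w} k P) (f0 : V.space (z (0 : ℕ)) →ₗ[k] M)
    (g : ∀ i : ℕ, V.space (z ((i+1 : ℕ) : ℤ)) →ₗ[k] V.space (z (i : ℕ))) :
    ∀ i : ℕ, V.space (z (i : ℕ)) →ₗ[k] M
  | 0 => f0
  | (i+1) => auxChain z V f0 g i ∘ₗ g i

theorem auxCount (hzz : IsZigzagWith {i : ℤ | 0 ≤ i} z sq) (hN : 0 ≤ N)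
    (hfd : ∀ x : P, FiniteDimensional k (V.space x)) (n : ℕ) (hn : (n : ℤ) ≤ N)
    (hAd : IsIntervalDecomp k (restrictMod k V (zigzagSeg z sq N)) A) :
    {U : PersSubmod k (restrictMod k V (zigzagSeg z sq N)) |
        U ∈ A ∧ auxCarr k hzz U 0 ≠ ⊥ ∧ auxCarr k hzz U n ≠ ⊥}.Finite ∧
    {U : PersSubmod k (restrictMod k V (zigzagSeg z sq N)) |
        U ∈ A ∧ auxCarr k hzz U 0 ≠ ⊥ ∧ auxCarr k hzz U n ≠ ⊥}.ncard = auxRho k z V n := by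
  classical
  have hA : IsDecomp k (restrictMod k V (zigzagSeg z sq N)) A := hAd.1
  set Full := {U : PersSubmod k (restrictMod k V (zigzagSeg z sq N)) |
      U ∈ A ∧ auxCarr k hzz U 0 ≠ ⊥ ∧ auxCarr k hzz U n ≠ ⊥} with hFull
  have h0N : ((0 : ℕ) : ℤ) ≤ N := hN
  have pf0 := auxSegMem hzz (Int.ofNat_nonneg 0) h0N
  set x0 : ↥(zigzagSeg z sq N) := ⟨z ((0 : ℕ) : ℤ), pf0⟩ with hx0
  haveI hfd0 : FiniteDimensional k (V.space (z ((0 : ℕ) : ℤ))) := hfd _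
  haveI hfd0' : FiniteDimensional k ((restrictMod k V (zigzagSeg z sq N)).space x0) := hfd _
  -- Step A : finiteness
  have hsub : Full ⊆ {U | U ∈ A ∧ U.carrier x0 ≠ ⊥} := by
    intro U hU
    exact ⟨hU.1, by rw [← auxCarr_eq k hzz U 0 h0N pf0]; exact hU.2.1⟩
  have hfin0 : {U : PersSubmod k (restrictMod k V (zigzagSeg z sq N)) |
      U ∈ A ∧ U.carrier x0 ≠ ⊥}.Finite := by
    have hind : iSupIndep (fun j : {j : ↥A // j.1.carrier x0 ≠ ⊥} => j.1.1.carrier x0) :=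
      (hA x0).1.comp Subtype.val_injective
    choose wv hwmem hwne using
      fun j : {j : ↥A // j.1.carrier x0 ≠ ⊥} => (Submodule.ne_bot_iff _).mp j.2
    have hli : LinearIndependent k wv := hind.linearIndependent _ hwmem hwne
    haveI : Module.Finite k ((restrictMod k V (zigzagSeg z sq N)).space x0) := hfd _
    haveI := hli.finite
    have himg : {U : PersSubmod k (restrictMod k V (zigzagSeg z sq N)) |
        U ∈ A ∧ U.carrier x0 ≠ ⊥}
        = (fun j : {j : ↥A // j.1.carrier x0 ≠ ⊥} => j.1.1) '' Set.univ := by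
      ext U
      constructor
      · rintro ⟨h1, h2⟩
        exact ⟨⟨⟨U, h1⟩, h2⟩, trivial, rfl⟩
      · rintro ⟨j, -, rfl⟩
        exact ⟨j.1.2, j.2⟩
    rw [himg]
    exact Set.Finite.image _ Set.finite_univ
  have hFin : Full.Finite := hfin0.subset hsub
  -- Step B : choose generators and sections
  have hdata : ∀ Uf : ↥Full, ∃ (u : V.space (z ((0 : ℕ) : ℤ)))
      (s : ∀ i : ℕ, V.space (z (i : ℕ))),
      u ∈ auxCarr k hzz Uf.1 0 ∧ u ≠ 0 ∧ s ∈ auxL k z V n ∧ s 0 = u ∧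
        ∀ i, i ≤ n → s i ∈ auxCarr k hzz Uf.1 i := by
    rintro ⟨U, hUA, hb0, hbn⟩
    obtain ⟨u, humem, hune⟩ := (Submodule.ne_bot_iff _).mp hb0
    obtain ⟨I, hI, ⟨iso⟩⟩ := hAd.2 U hUA
    obtain ⟨s, h1, h2, h3⟩ := auxSect k n hn hI iso hb0 hbn humem
    exact ⟨u, s, humem, hune, h1, h2, h3⟩
  choose uvec svec humem hune hsL hs0 hsmem using hdata
  set lin0 : V.space (z ((0 : ℕ) : ℤ)) →ₗ[k] ((∀ i : ℕ, V.space (z (i : ℕ))) ⧸ auxR k z V n) :=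
    (auxR k z V n).mkQ ∘ₗ LinearMap.single k (fun i : ℕ => V.space (z (i : ℕ))) 0 with hlin0
  set vfam : ↥Full → ((∀ i : ℕ, V.space (z (i : ℕ))) ⧸ auxR k z V n) :=
    fun Uf => lin0 (uvec Uf) with hvfam
  have hlam : ∀ s : ∀ i : ℕ, V.space (z (i : ℕ)), auxLam k z V n s = lin0 (s 0) :=
    fun s => rfl
  -- Step C : span equality
  have hspan : Submodule.map (auxLam k z V n) (auxL k z V n)
      = Submodule.span k (Set.range vfam) := by
    apply le_antisymm
    · rintro q ⟨s, hsLmem, rfl⟩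
      have hsup : s 0 ∈ ⨆ (j : ↥A), j.1.carrier x0 := by
        rw [(hA x0).2]; trivial
      obtain ⟨f, hf, hfs⟩ := (Submodule.mem_iSup_iff_exists_finsupp (fun j : ↥A => j.1.carrier x0) (s 0)).mp hsup
      have hq : auxLam k z V n s = f.sum fun j v => lin0 v := by
        rw [hlam, ← hfs]
        exact map_finsuppSum lin0 f _
      rw [hq]
      apply Submodule.finsuppSum_mem
      intro j hj
      have hcomp := auxCompSect k (hzz := hzz) (hA := hA) (hU := j.2) n hn hsLmem
      have ht0 : auxP k hzz hA j.2 0 (s 0) = f j := by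
        conv_lhs => rw [← hfs]
        refine (map_finsuppSum _ f _).trans ?_
        rw [Finsupp.sum_eq_single j]
        · apply auxP_self k 0 h0N
          rw [auxCarr_eq k hzz j.1 0 h0N pf0]
          exact hf j
        · intro j' hj' hne
          apply auxP_other k 0 h0N j'.2 (fun he => hne (Subtype.ext he))
          rw [auxCarr_eq k hzz j'.1 0 h0N pf0]
          exact hf j'
        · intro _
          exact map_zero _
      by_cases hbn' : auxCarr k hzz j.1 n = ⊥
      · have h1 : lin0 (f j) = (auxR k z V n).mkQ
            (Pi.single n (auxP k hzz hA j.2 n (s n))) := by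
          rw [← ht0]
          exact auxClassEq k V hzz n hcomp n le_rfl
        have h2 : auxP k hzz hA j.2 n (s n) = 0 := by
          have hmm := auxP_mem k (hzz := hzz) (hA := hA) (hU := j.2) n hn (s n)
          rw [hbn'] at hmm
          simpa using hmm
        rw [h1, h2]
        simp only [Pi.single_zero, map_zero]
        exact Submodule.zero_mem _
      · by_cases hb0' : auxCarr k hzz j.1 0 = ⊥
        · have hcz : j.1.carrier x0 = ⊥ := by
            rw [← auxCarr_eq k hzz j.1 0 h0N pf0]; exact hb0'
          have : f j = 0 := by
            have := hf j
            rw [hcz] at this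
            exact (Submodule.mem_bot k).mp this
          rw [this]
          convert Submodule.zero_mem _ using 1
          exact map_zero lin0
        · set Uf : ↥Full := ⟨j.1, j.2, hb0', hbn'⟩ with hUf
          obtain ⟨I, hI, ⟨iso⟩⟩ := hAd.2 j.1 j.2
          have hx0I : x0 ∈ I := (auxNeBotIff k iso x0).mp (by
            rw [← auxCarr_eq k hzz j.1 0 h0N pf0]; exact hb0')
          have hmem1 : uvec Uf ∈ j.1.carrier x0 := by
            rw [← auxCarr_eq k hzz j.1 0 h0N pf0]
            exact humem Uf
          have hmem2 : f j ∈ j.1.carrier x0 := hf j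
          obtain ⟨c, hc⟩ := auxSpanOne k iso hx0I hmem1 (hune Uf) hmem2
          rw [hc]
          convert Submodule.smul_mem _ c (Submodule.subset_span (s := Set.range vfam) ⟨Uf, rfl⟩) using 1
          exact map_smul lin0 c _
    · rw [Submodule.span_le]
      rintro q ⟨Uf, rfl⟩
      exact ⟨svec Uf, hsL Uf, by rw [hlam, hs0]⟩
  -- Step D : linear independence
  have hli : LinearIndependent k vfam := by
    rw [linearIndependent_iff']
    intro tset gcoef hsum U₀ hU₀t
    obtain ⟨I, hI, ⟨iso⟩⟩ := hAd.2 U₀.1 U₀.2.1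
    have hgex : ∀ i : ℕ, i + 1 ≤ n →
        ∃ gm : V.space (z ((i+1 : ℕ) : ℤ)) →ₗ[k] V.space (z (i : ℕ)),
        (∀ v, gm (auxP k hzz hA U₀.2.1 (i+1) v) = gm v) ∧
        (∀ (h : z (i : ℕ) ≤ z ((i+1 : ℕ) : ℤ)) (v : V.space (z (i : ℕ))),
          gm (V.map h v) = auxP k hzz hA U₀.2.1 i v) ∧
        (∀ (h : z ((i+1 : ℕ) : ℤ) ≤ z (i : ℕ)) (v : V.space (z ((i+1 : ℕ) : ℤ))),
          gm v = V.map h (auxP k hzz hA U₀.2.1 (i+1) v)) := by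
      intro i hi1
      have hiN : (i : ℤ) ≤ N := by
        have h1 : ((i+1 : ℕ) : ℤ) ≤ (n : ℤ) := by exact_mod_cast hi1
        push_cast at h1
        omega
      have hi1N : ((i+1 : ℕ) : ℤ) ≤ N := by
        have h1 : ((i+1 : ℕ) : ℤ) ≤ (n : ℤ) := by exact_mod_cast hi1
        omega
      have pfi := auxSegMem hzz (Int.ofNat_nonneg i) hiN
      have pfi1 := auxSegMem hzz (Int.ofNat_nonneg (i+1)) hi1N
      have hbi : auxCarr k hzz U₀.1 i ≠ ⊥ :=
        auxSuppConv k hI iso (Nat.zero_le i) (by omega) hn U₀.2.2.1 U₀.2.2.2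
      have hbi1 : auxCarr k hzz U₀.1 (i+1) ≠ ⊥ :=
        auxSuppConv k hI iso (Nat.zero_le _) hi1 hn U₀.2.2.1 U₀.2.2.2
      have mIi : (⟨z (i : ℕ), pfi⟩ : ↥(zigzagSeg z sq N)) ∈ I :=
        (auxNeBotIff k iso _).mp (by rw [← auxCarr_eq k hzz U₀.1 i hiN pfi]; exact hbi)
      have mIi1 : (⟨z ((i+1 : ℕ) : ℤ), pfi1⟩ : ↥(zigzagSeg z sq N)) ∈ I :=
        (auxNeBotIff k iso _).mp (by rw [← auxCarr_eq k hzz U₀.1 (i+1) hi1N pfi1]; exact hbi1)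
      have habsorb : ∀ v, auxProj k hA U₀.2.1 (⟨z ((i+1 : ℕ) : ℤ), pfi1⟩ : ↥(zigzagSeg z sq N))
          (auxP k hzz hA U₀.2.1 (i+1) v)
          = auxProj k hA U₀.2.1 ⟨z ((i+1 : ℕ) : ℤ), pfi1⟩ v := by
        intro v
        have h1 : auxP k hzz hA U₀.2.1 (i+1) v
            = ((auxProj k hA U₀.2.1 (⟨z ((i+1 : ℕ) : ℤ), pfi1⟩ : ↥(zigzagSeg z sq N)) v :
              ↥((U₀.1).carrier ⟨z ((i+1 : ℕ) : ℤ), pfi1⟩)) :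
              (restrictMod k V (zigzagSeg z sq N)).space ⟨z ((i+1 : ℕ) : ℤ), pfi1⟩) := by
          rw [auxP_eq k (i+1) hi1N pfi1]
          rfl
        rw [h1]
        apply Subtype.ext
        exact auxProj_self k hA U₀.2.1 (auxProj k hA U₀.2.1 ⟨z ((i+1 : ℕ) : ℤ), pfi1⟩ v).2
      rcases auxConsecCmp hzz (i : ℤ) (Int.ofNat_nonneg i) with hfw | hbw
      · have hfw' : z (i : ℕ) ≤ z ((i+1 : ℕ) : ℤ) := hfw
        have hxy : (⟨z (i : ℕ), pfi⟩ : ↥(zigzagSeg z sq N)) ≤ ⟨z ((i+1 : ℕ) : ℤ), pfi1⟩ :=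
          Subtype.mk_le_mk.mpr hfw'
        have hbij := auxStepBij k iso hxy mIi mIi1
        set E := LinearEquiv.ofBijective _ hbij with hE
        refine ⟨(U₀.1.carrier ⟨z (i : ℕ), pfi⟩).subtype ∘ₗ E.symm.toLinearMap ∘ₗ
            auxProj k hA U₀.2.1 ⟨z ((i+1 : ℕ) : ℤ), pfi1⟩, ?_, ?_, ?_⟩
        · intro v
          exact congrArg (fun t => ((U₀.1).carrier ⟨z (i : ℕ), pfi⟩).subtype (E.symm t))
            (habsorb v)
        · intro h v
          have hproj : auxProj k hA U₀.2.1 (⟨z ((i+1 : ℕ) : ℤ), pfi1⟩ : ↥(zigzagSeg z sq N))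
              (V.map h v) = E (auxProj k hA U₀.2.1 ⟨z (i : ℕ), pfi⟩ v) := by
            apply Subtype.ext
            exact auxProj_map k hA U₀.2.1 hxy v
          have h2 : E.symm (auxProj k hA U₀.2.1
              (⟨z ((i+1 : ℕ) : ℤ), pfi1⟩ : ↥(zigzagSeg z sq N)) (V.map h v))
              = auxProj k hA U₀.2.1 ⟨z (i : ℕ), pfi⟩ v :=
            (congrArg E.symm hproj).trans (E.symm_apply_apply _)
          have h3 : auxP k hzz hA U₀.2.1 i v
              = ((U₀.1).carrier ⟨z (i : ℕ), pfi⟩).subtype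
                  (auxProj k hA U₀.2.1 ⟨z (i : ℕ), pfi⟩ v) := by
            rw [auxP_eq k i hiN pfi]
            rfl
          exact (congrArg (fun t => ((U₀.1).carrier ⟨z (i : ℕ), pfi⟩).subtype t) h2).trans
            h3.symm
        · intro h v
          exact absurd (le_antisymm hfw' h) (auxZNe hzz (Int.ofNat_nonneg i))
      · have hbw' : z ((i+1 : ℕ) : ℤ) ≤ z (i : ℕ) := hbw
        refine ⟨(V.map hbw') ∘ₗ ((U₀.1.carrier ⟨z ((i+1 : ℕ) : ℤ), pfi1⟩).subtype ∘ₗ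
            auxProj k hA U₀.2.1 ⟨z ((i+1 : ℕ) : ℤ), pfi1⟩), ?_, ?_, ?_⟩
        · intro v
          exact congrArg (fun t => V.map hbw'
            (((U₀.1).carrier ⟨z ((i+1 : ℕ) : ℤ), pfi1⟩).subtype t)) (habsorb v)
        · intro h v
          exact absurd (le_antisymm h hbw') (auxZNe hzz (Int.ofNat_nonneg i))
        · intro h v
          simp only [LinearMap.comp_apply]
          rw [auxP_eq k (i+1) hi1N pfi1]
          rfl
    choose gm hgabs hgfw hgbw using hgex
    set G : ∀ i : ℕ, V.space (z ((i+1 : ℕ) : ℤ)) →ₗ[k] V.space (z (i : ℕ)) :=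
      fun i => if h : i + 1 ≤ n then gm i h else 0 with hG
    set F := auxChain k z V (auxP k hzz hA U₀.2.1 0) G with hFdef
    have hFsucc : ∀ i : ℕ, F (i+1) = F i ∘ₗ G i := fun i => rfl
    have habs : ∀ i : ℕ, i ≤ n → ∀ v, F i (auxP k hzz hA U₀.2.1 i v) = F i v := by
      intro i
      induction i with
      | zero =>
        intro _ v
        show auxP k hzz hA U₀.2.1 0 (auxP k hzz hA U₀.2.1 0 v) = auxP k hzz hA U₀.2.1 0 v
        exact auxP_self k 0 h0N (auxP_mem k 0 h0N v)
      | succ i ih =>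
        intro hi v
        rw [hFsucc]
        simp only [LinearMap.comp_apply]
        have hGi : G i = gm i hi := dif_pos hi
        rw [hGi, hgabs i hi v]
    set Phi : (∀ i : ℕ, V.space (z (i : ℕ))) →ₗ[k] V.space (z ((0 : ℕ) : ℤ)) :=
      ∑ i ∈ Finset.range (n+1), (F i) ∘ₗ (LinearMap.proj i) with hPhi
    have hPhiSingle : ∀ (i : ℕ), i ≤ n → ∀ v, Phi (Pi.single i v) = F i v := by
      intro i hi v
      rw [hPhi, LinearMap.sum_apply]
      rw [Finset.sum_eq_single i]
      · simp only [LinearMap.comp_apply, LinearMap.proj_apply, Pi.single_eq_same]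
      · intro j hjr hne
        simp only [LinearMap.comp_apply, LinearMap.proj_apply]
        rw [Pi.single_eq_of_ne hne]
        simp
      · intro habs'
        exact absurd (Finset.mem_range.mpr (by omega)) habs'
    have hker : auxR k z V n ≤ LinearMap.ker Phi := by
      rw [auxR, Submodule.span_le]
      rintro x ⟨i, hi, hx | hx⟩
      · obtain ⟨h, v, rfl⟩ := hx
        rw [SetLike.mem_coe, LinearMap.mem_ker, map_sub]
        rw [hPhiSingle i (by omega), hPhiSingle (i+1) (by omega)]
        rw [hFsucc]
        simp only [LinearMap.comp_apply]
        have hGi : G i = gm i (show i + 1 ≤ n by omega) := dif_pos _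
        rw [hGi, hgfw i _ h v, habs i (by omega) v, sub_self]
      · obtain ⟨h, v, rfl⟩ := hx
        rw [SetLike.mem_coe, LinearMap.mem_ker, map_sub]
        rw [hPhiSingle i (by omega), hPhiSingle (i+1) (by omega)]
        have hiN : (i : ℤ) ≤ N := by
          have h1 : (i : ℤ) < (n : ℤ) := by exact_mod_cast hi
          omega
        have hi1N : ((i+1 : ℕ) : ℤ) ≤ N := by
          have h1 : ((i+1 : ℕ) : ℤ) ≤ (n : ℤ) := by exact_mod_cast hi
          omega
        have hGi : G i = gm i (show i + 1 ≤ n by omega) := dif_pos _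
        have e1 : F i (V.map h v) = F i (auxP k hzz hA U₀.2.1 i (V.map h v)) :=
          (habs i (by omega) _).symm
        have e2 : auxP k hzz hA U₀.2.1 i (V.map h v)
            = V.map h (auxP k hzz hA U₀.2.1 (i+1) v) := auxP_map k hi1N hiN h v
        have e3 : V.map h (auxP k hzz hA U₀.2.1 (i+1) v)
            = gm i (show i + 1 ≤ n by omega) v := (hgbw i _ h v).symm
        rw [hFsucc, LinearMap.comp_apply, hGi, e1, e2, e3, sub_self]
    set fbar := (auxR k z V n).liftQ Phi hker with hfbar
    have happ : ∀ Uf : ↥Full, fbar (vfam Uf) = auxP k hzz hA U₀.2.1 0 (uvec Uf) := by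
      intro Uf
      show fbar (lin0 (uvec Uf)) = _
      rw [hlin0]
      simp only [LinearMap.comp_apply]
      rw [Submodule.mkQ_apply, hfbar, Submodule.liftQ_apply]
      rw [LinearMap.single_apply, hPhiSingle 0 (Nat.zero_le n)]
      rfl
    have hz : ∑ Uf ∈ tset, gcoef Uf • (auxP k hzz hA U₀.2.1 0 (uvec Uf)) = 0 := by
      have hcongr := congrArg fbar hsum
      rw [map_sum, map_zero] at hcongr
      simp only [map_smul] at hcongr
      simp only [happ] at hcongr
      exact hcongr
    have hsingle : ∑ Uf ∈ tset, gcoef Uf • (auxP k hzz hA U₀.2.1 0 (uvec Uf))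
        = gcoef U₀ • (auxP k hzz hA U₀.2.1 0 (uvec U₀)) := by
      apply Finset.sum_eq_single
      · intro Uf hUft hne
        rw [auxP_other k 0 h0N Uf.2.1 (fun he => hne (Subtype.ext he)) (humem Uf), smul_zero]
      · intro hU₀t'
        exact absurd hU₀t hU₀t'
    rw [hsingle, auxP_self k 0 h0N (humem U₀)] at hz
    rcases smul_eq_zero.mp hz with h | h
    · exact h
    · exact absurd h (hune U₀)
  -- Step E : conclusion
  refine ⟨hFin, ?_⟩
  haveI : Fintype ↥Full := hFin.fintype
  rw [auxRho, hspan, finrank_span_eq_card hli]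
  rw [← Nat.card_coe_set_eq, Nat.card_eq_fintype_card]

end Counting3

/-- Existence of a monotonicity threshold: if, for every `n ∈ ℕ`, every summand of
every interval decomposition of `V(n)` is nonzero at `z 0` or at `z n`, then `V` is
monotonic after `z m` for some `m ∈ ℕ`. -/
theorem exists_monotonic_threshold (P : Type v) [PartialOrder P]
    (z : ℤ → P) (sq : P → P → Prop)
    (hzz : IsZigzagWith {i : ℤ | 0 ≤ i} z sq)
    (V : PersMod.{u, v, w} k P) (hfd : ∀ x : P, FiniteDimensional k (V.space x))
    (hyp : ∀ n : ℤ, 0 ≤ n →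
      ∀ A : Set (PersSubmod k (restrictMod k V (zigzagSeg z sq n))),
        IsIntervalDecomp k (restrictMod k V (zigzagSeg z sq n)) A →
        ∀ U ∈ A,
          (∃ p : ↥(zigzagSeg z sq n), p.1 = z 0 ∧ U.carrier p ≠ ⊥) ∨
          (∃ p : ↥(zigzagSeg z sq n), p.1 = z n ∧ U.carrier p ≠ ⊥)) :
    ∃ m : ℤ, 0 ≤ m ∧ MonotonicAfter k z sq V m := by
  classical
  have hne : (Set.range (auxRho k z V)).Nonempty := ⟨auxRho k z V 0, 0, rfl⟩
  obtain ⟨m, hm⟩ := Nat.sInf_mem hne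
  refine ⟨(m : ℤ), Int.ofNat_nonneg m, ?_⟩
  intro nn hmn A hAd U hUA hvan p hsqp
  by_contra hUp
  have hnn0 : 0 ≤ nn := le_trans (Int.ofNat_nonneg m) hmn
  obtain ⟨n', rfl⟩ := Int.eq_ofNat_of_zero_le hnn0
  have hmN : (m : ℤ) ≤ ((n' : ℕ) : ℤ) := hmn
  have pfm := auxSegMem hzz (Int.ofNat_nonneg m) hmN
  have pf0 := auxSegMem hzz (Int.ofNat_nonneg 0) hnn0
  have pfn := auxSegMem hzz (Int.ofNat_nonneg n') le_rfl
  rcases hyp (↑n') hnn0 A hAd U hUA with ⟨q, hq1, hq2⟩ | ⟨q, hq1, hq2⟩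
  swap
  · exact hq2 (hvan q hq1)
  have hq0 : q = (⟨z ((0 : ℕ) : ℤ), pf0⟩ : ↥(zigzagSeg z sq ((n' : ℕ) : ℤ))) :=
    Subtype.ext hq1
  rw [hq0] at hq2
  obtain ⟨I, hI, ⟨iso⟩⟩ := hAd.2 U hUA
  have hb0 : auxCarr k hzz U 0 ≠ ⊥ := by
    rw [auxCarr_eq k hzz U 0 hnn0 pf0]
    exact hq2
  have hbm : auxCarr k hzz U m ≠ ⊥ := by
    rw [auxCarr_eq k hzz U m hmN pfm]
    have hmemI : (⟨z ((m : ℕ) : ℤ), pfm⟩ : ↥(zigzagSeg z sq ((n' : ℕ) : ℤ))) ∈ I := by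
      apply auxIntervalMem hzz hI ((auxNeBotIff k iso _).mp hq2) ((auxNeBotIff k iso p).mp hUp)
      · exact auxZMono hzz le_rfl (Int.ofNat_nonneg m)
      · exact hsqp
    exact (auxNeBotIff k iso _).mpr hmemI
  have hbn : auxCarr k hzz U n' = ⊥ := by
    rw [auxCarr_eq k hzz U n' le_rfl pfn]
    exact hvan _ rfl
  have hcm := auxCount k hzz hnn0 hfd m hmN hAd
  have hcn := auxCount k hzz hnn0 hfd n' le_rfl hAd
  have hss : {U' : PersSubmod k (restrictMod k V (zigzagSeg z sq ((n' : ℕ) : ℤ))) |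
        U' ∈ A ∧ auxCarr k hzz U' 0 ≠ ⊥ ∧ auxCarr k hzz U' n' ≠ ⊥}
      ⊆ {U' : PersSubmod k (restrictMod k V (zigzagSeg z sq ((n' : ℕ) : ℤ))) |
        U' ∈ A ∧ auxCarr k hzz U' 0 ≠ ⊥ ∧ auxCarr k hzz U' m ≠ ⊥} := by
    rintro U' ⟨h1, h2, h3⟩
    obtain ⟨I', hI', ⟨iso'⟩⟩ := hAd.2 U' h1
    exact ⟨h1, h2, auxSuppConv k hI' iso' (Nat.zero_le m) (by exact_mod_cast hmN) le_rfl h2 h3⟩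
  have hle1 : auxRho k z V m ≤ auxRho k z V n' := by
    rw [hm]
    exact Nat.sInf_le ⟨n', rfl⟩
  have heq := Set.eq_of_subset_of_ncard_le hss (by rw [hcm.2, hcn.2]; exact hle1) hcm.1
  have hUm : U ∈ {U' : PersSubmod k (restrictMod k V (zigzagSeg z sq ((n' : ℕ) : ℤ))) |
      U' ∈ A ∧ auxCarr k hzz U' 0 ≠ ⊥ ∧ auxCarr k hzz U' m ≠ ⊥} := ⟨hUA, hb0, hbm⟩
  rw [← heq] at hUm
  exact hUm.2.2 hbn
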